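/- For every positive integer n there exists a constant C > 0, depending only on n, with the following property: for every positive integer T and every positive integer m there exist real coefficients α₁,…,α_m and exponents β₁,…,β_m with β_k > 0 for every k, such that for every integer B with 1 ≤ B ≤ T (the same coefficients working for all such B simultaneously), ∑_{s=0}^{∞} | 𝟙{s = B} − ∑_{k=1}^{m} α_k e^{−β_k (s − B)} | ≤ C · e^{0.01(n+1)T} / mⁿ. -/
import Mathlib

open Polynomial Finset

lemma pow_le_fact_mul_exp (n : ℕ) {x : ℝ} (hx : 0 ≤ x) :
    x ^ n ≤ (n.factorial : ℝ) * Real.exp x := by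
  have h1 : x ^ n / (n.factorial : ℝ) ≤ Real.exp x := by
    calc x ^ n / (n.factorial : ℝ)
        ≤ ∑ i ∈ range (n + 1), x ^ i / (i.factorial : ℝ) := by
          refine Finset.single_le_sum (f := fun i => x ^ i / (i.factorial : ℝ)) ?_ (Finset.self_mem_range_succ n)
          intro i _; positivity
      _ ≤ Real.exp x := Real.sum_le_exp_of_nonneg hx _
  have hf : (0:ℝ) < (n.factorial : ℝ) := by positivity
  calc x ^ n = x ^ n / (n.factorial : ℝ) * (n.factorial : ℝ) := by field_simp
    _ ≤ Real.exp x * (n.factorial : ℝ) := by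
        exact mul_le_mul_of_nonneg_right h1 hf.le
    _ = (n.factorial : ℝ) * Real.exp x := by ring

/-- approximation of shifted indicators `𝟙{s = B}` in `ℓ¹(ℕ)` by shifted sums of
`m` decaying exponentials `∑ₖ αₖ e^{−βₖ(s−B)}`, with coefficients independent of `B`,
uniformly over `1 ≤ B ≤ T`, at rate `C · e^{0.01(n+1)T} / mⁿ`. -/
theorem stmt1 :
    ∀ n : ℕ, 0 < n → ∃ C : ℝ, 0 < C ∧
      ∀ T m : ℕ, 0 < T → 0 < m →
        ∃ α β : Fin m → ℝ, (∀ k, 0 < β k) ∧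
          ∀ B : ℕ, 1 ≤ B → B ≤ T →
            (∑' s : ℕ, |(if s = B then (1 : ℝ) else 0) -
                ∑ k, α k * Real.exp (-(β k) * ((s : ℝ) - (B : ℝ)))|)
              ≤ C * Real.exp (0.01 * ((n : ℝ) + 1) * (T : ℝ)) / (m : ℝ) ^ n := by
  intro n hn
  refine ⟨(n.factorial : ℝ) * 400 ^ n, by positivity, ?_⟩
  intro T m hT hm
  have hmR : (0:ℝ) < (m:ℝ) ^ n := by positivity
  have hexpT1 : (1:ℝ) ≤ Real.exp (0.01 * ((n : ℝ) + 1) * (T : ℝ)) := by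
    rw [Real.one_le_exp_iff]; positivity
  by_cases hcase : m ≤ 4 * T
  · -- trivial approximation by zero
    refine ⟨fun _ => 0, fun _ => 1, fun _ => one_pos, ?_⟩
    intro B hB1 hBT
    have hval : (∑' s : ℕ, |(if s = B then (1 : ℝ) else 0) -
        ∑ k : Fin m, (0:ℝ) * Real.exp (-(1:ℝ) * ((s : ℝ) - (B : ℝ)))|) = 1 := by
      have he : (fun s : ℕ => |(if s = B then (1 : ℝ) else 0) -
          ∑ k : Fin m, (0:ℝ) * Real.exp (-(1:ℝ) * ((s : ℝ) - (B : ℝ)))|)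
          = fun s : ℕ => if s = B then (1:ℝ) else 0 := by
        funext s
        by_cases h : s = B <;> simp [h]
      rw [he, tsum_ite_eq]
    rw [hval, le_div_iff₀ hmR, one_mul]
    -- m^n ≤ n! * 400^n * exp(...)
    have h1 : (m:ℝ) ^ n ≤ (400:ℝ) ^ n * ((0.01:ℝ) * T) ^ n := by
      rw [← mul_pow]
      have : (m:ℝ) ≤ 400 * (0.01 * T) := by
        have : (m:ℝ) ≤ 4 * T := by exact_mod_cast hcase
        linarith
      exact pow_le_pow_left₀ (by positivity) this n
    have h2 : ((0.01:ℝ) * T) ^ n ≤ (n.factorial : ℝ) * Real.exp (0.01 * T) :=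
      pow_le_fact_mul_exp n (by positivity)
    have h3 : Real.exp ((0.01:ℝ) * T) ≤ Real.exp (0.01 * ((n : ℝ) + 1) * (T : ℝ)) := by
      apply Real.exp_le_exp.mpr
      have hn0 : (0:ℝ) ≤ (n:ℝ) := Nat.cast_nonneg n
      nlinarith [(Nat.cast_nonneg T : (0:ℝ) ≤ (T:ℝ))]
    calc (m:ℝ) ^ n ≤ (400:ℝ) ^ n * ((0.01:ℝ) * T) ^ n := h1
      _ ≤ (400:ℝ) ^ n * ((n.factorial : ℝ) * Real.exp (0.01 * T)) := by
          exact mul_le_mul_of_nonneg_left h2 (by positivity)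
      _ ≤ (400:ℝ) ^ n * ((n.factorial : ℝ) * Real.exp (0.01 * ((n : ℝ) + 1) * (T : ℝ))) := by
          apply mul_le_mul_of_nonneg_left _ (by positivity)
          exact mul_le_mul_of_nonneg_left h3 (by positivity)
      _ = (n.factorial : ℝ) * 400 ^ n * Real.exp (0.01 * ((n : ℝ) + 1) * (T : ℝ)) := by ring
  · -- real construction
    push_neg at hcase
    have hTm : T < m := by omega
    set p : ℕ := m - T with hp
    have hpT : p + T = m := by omega
    have hp1 : 1 ≤ p := by omega
    set a : ℕ → ℝ := fun j => Real.exp (j + 1) with ha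
    have ha1 : ∀ j : ℕ, (1:ℝ) < a j := by
      intro j; rw [ha]; simp only
      rw [Real.one_lt_exp_iff]; positivity
    have hane : ∀ j : ℕ, (1:ℝ) - a j ≠ 0 := fun j => by
      have := ha1 j; intro h; linarith
    -- the polynomial
    set P : Polynomial ℝ :=
      X ^ p * ∏ j ∈ range T, (C ((1 - a j)⁻¹) * (X - C (a j))) with hP
    have hdeg : P.natDegree < m + 1 := by
      have h1 : P.natDegree ≤ p + (∏ j ∈ range T, (C ((1 - a j)⁻¹) * (X - C (a j)))).natDegree := by
        calc P.natDegree ≤ (X ^ p : Polynomial ℝ).natDegree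
              + (∏ j ∈ range T, (C ((1 - a j)⁻¹) * (X - C (a j)))).natDegree :=
            Polynomial.natDegree_mul_le
          _ = _ := by rw [Polynomial.natDegree_X_pow]
      have h2 : (∏ j ∈ range T, (C ((1 - a j)⁻¹) * (X - C (a j)))).natDegree ≤ T := by
        calc (∏ j ∈ range T, (C ((1 - a j)⁻¹) * (X - C (a j)))).natDegree
            ≤ ∑ j ∈ range T, (C ((1 - a j)⁻¹) * (X - C (a j))).natDegree :=
              Polynomial.natDegree_prod_le _ _
          _ ≤ ∑ j ∈ range T, 1 := by
              apply Finset.sum_le_sum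
              intro j _
              calc (C ((1 - a j)⁻¹) * (X - C (a j))).natDegree
                  ≤ (C ((1 - a j)⁻¹)).natDegree + (X - C (a j)).natDegree :=
                    Polynomial.natDegree_mul_le
                _ ≤ 1 := by
                    rw [Polynomial.natDegree_C, Polynomial.natDegree_X_sub_C]
          _ = T := by simp
      omega
    have heval : ∀ y : ℝ, P.eval y = y ^ p * ∏ j ∈ range T, (1 - a j)⁻¹ * (y - a j) := by
      intro y
      rw [hP]
      simp [Polynomial.eval_prod]
    have hc0 : P.coeff 0 = 0 := by
      rw [Polynomial.coeff_zero_eq_eval_zero, heval, zero_pow (by omega), zero_mul]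
    have hval1 : P.eval 1 = 1 := by
      rw [heval, one_pow, one_mul]
      rw [Finset.prod_eq_one]
      intro j _
      exact inv_mul_cancel₀ (hane j)
    have hvala : ∀ j ∈ range T, P.eval (a j) = 0 := by
      intro j hj
      rw [heval]
      apply mul_eq_zero_of_right
      exact Finset.prod_eq_zero hj (by ring)
    have hbound : ∀ y : ℝ, 0 ≤ y → y ≤ Real.exp (-1) → |P.eval y| ≤ Real.exp T * y ^ p := by
      intro y hy0 hy1
      have hylt1 : y < 1 := lt_of_le_of_lt hy1 (by
        rw [Real.exp_lt_one_iff]; norm_num)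
      rw [heval, abs_mul, abs_pow, abs_of_nonneg hy0, mul_comm]
      apply mul_le_mul_of_nonneg_right _ (by positivity)
      rw [Finset.abs_prod]
      calc ∏ j ∈ range T, |(1 - a j)⁻¹ * (y - a j)|
          ≤ ∏ j ∈ range T, Real.exp 1 := by
            apply Finset.prod_le_prod (fun j _ => abs_nonneg _)
            intro j _
            have haj := ha1 j
            have hae : Real.exp 1 ≤ a j := by
              rw [ha]; simp only
              apply Real.exp_le_exp.mpr
              have : (0:ℝ) ≤ (j:ℝ) := Nat.cast_nonneg j
              linarith
            have he1 : (2:ℝ) ≤ Real.exp 1 := by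
              have := Real.add_one_le_exp (1:ℝ); linarith
            rw [abs_mul, abs_inv, abs_of_neg (by linarith : (1:ℝ) - a j < 0),
              abs_of_neg (by linarith : y - a j < 0)]
            rw [neg_sub, neg_sub]
            rw [inv_mul_le_iff₀ (by linarith)]
            -- a j - y ≤ exp 1 * (a j - 1)
            nlinarith
        _ = Real.exp T := by
            rw [Finset.prod_const, Finset.card_range, ← Real.exp_nat_mul, mul_one]
    -- the coefficients
    refine ⟨fun k => P.coeff (k + 1), fun k => (k : ℝ) + 1, fun k => by positivity, ?_⟩
    intro B hB1 hBT
    have hsum : ∀ t : ℝ,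
        (∑ k : Fin m, P.coeff (k + 1) * Real.exp (-((k : ℝ) + 1) * t)) = P.eval (Real.exp (-t)) := by
      intro t
      have hterm : ∀ k : ℕ, Real.exp (-((k : ℝ) + 1) * t) = Real.exp (-t) ^ (k + 1) := by
        intro k
        rw [← Real.exp_nat_mul]
        congr 1
        push_cast
        ring
      rw [Polynomial.eval_eq_sum_range' hdeg]
      rw [Finset.sum_range_succ' (fun i => P.coeff i * Real.exp (-t) ^ i) m]
      rw [hc0, zero_mul, add_zero]
      rw [← Fin.sum_univ_eq_sum_range (fun i => P.coeff (i + 1) * Real.exp (-t) ^ (i + 1)) m]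
      exact Finset.sum_congr rfl fun k _ => by rw [hterm k]
    set f : ℕ → ℝ := fun s => |(if s = B then (1 : ℝ) else 0) -
        ∑ k : Fin m, P.coeff (k + 1) * Real.exp (-((k : ℝ) + 1) * ((s : ℝ) - (B : ℝ)))| with hf
    have hzero : ∀ s : ℕ, s ≤ B → f s = 0 := by
      intro s hs
      rcases eq_or_lt_of_le hs with h | h
      · rw [hf]; simp only
        rw [hsum ((s:ℝ) - (B:ℝ)), h]
        simp [hval1]
      · rw [hf]; simp only
        rw [hsum ((s:ℝ) - (B:ℝ))]
        have hd : B - s - 1 ∈ range T := by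
          simp only [Finset.mem_range]; omega
        have harg : Real.exp (-((s:ℝ) - (B:ℝ))) = a (B - s - 1) := by
          rw [ha]; simp only
          congr 1
          have h1 : ((B - s - 1 : ℕ) : ℝ) = (B : ℝ) - s - 1 := by
            have h2 : (B - s - 1) + (s + 1) = B := by omega
            have h3 := congrArg (fun x : ℕ => (x : ℝ)) h2
            push_cast at h3
            linarith
          rw [h1]; ring
        rw [harg, hvala _ hd]
        have : s ≠ B := by omega
        simp [this]
    have hub : ∀ i : ℕ, f (i + (B + 1)) ≤
        Real.exp ((T : ℝ) - (p : ℝ)) * (Real.exp (-(p : ℝ))) ^ i := by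
      intro i
      rw [hf]; simp only
      rw [hsum (((i + (B + 1) : ℕ) : ℝ) - (B : ℝ))]
      have hne : (i + (B + 1) : ℕ) ≠ B := by omega
      rw [if_neg hne, zero_sub, abs_neg]
      have harg : -(((i + (B + 1) : ℕ) : ℝ) - (B : ℝ)) = -((i : ℝ) + 1) := by
        push_cast; ring
      rw [harg]
      have hy0 : (0:ℝ) ≤ Real.exp (-((i : ℝ) + 1)) := (Real.exp_pos _).le
      have hy1 : Real.exp (-((i : ℝ) + 1)) ≤ Real.exp (-1) := by
        apply Real.exp_le_exp.mpr
        have : (0:ℝ) ≤ (i:ℝ) := Nat.cast_nonneg i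
        linarith
      calc |P.eval (Real.exp (-((i : ℝ) + 1)))|
          ≤ Real.exp T * Real.exp (-((i : ℝ) + 1)) ^ p := hbound _ hy0 hy1
        _ = Real.exp ((T : ℝ) - (p : ℝ)) * (Real.exp (-(p : ℝ))) ^ i := by
            rw [← Real.exp_nat_mul, ← Real.exp_nat_mul, ← Real.exp_add, ← Real.exp_add]
            congr 1
            ring
    have hr0 : (0:ℝ) ≤ Real.exp (-(p : ℝ)) := (Real.exp_pos _).le
    have hr1 : Real.exp (-(p : ℝ)) < 1 := by
      rw [Real.exp_lt_one_iff]
      have : (1:ℝ) ≤ (p:ℝ) := by exact_mod_cast hp1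
      linarith
    have hgsum : Summable (fun i : ℕ => Real.exp ((T : ℝ) - (p : ℝ)) * (Real.exp (-(p : ℝ))) ^ i) :=
      (summable_geometric_of_lt_one hr0 hr1).mul_left _
    have hfnn : ∀ s, 0 ≤ f s := fun s => abs_nonneg _
    have hsf : Summable f := by
      rw [← summable_nat_add_iff (B + 1)]
      exact Summable.of_nonneg_of_le (fun i => hfnn _) hub hgsum
    have htsum : (∑' s : ℕ, f s) ≤ 2 * Real.exp ((T : ℝ) - (p : ℝ)) := by
      rw [← Summable.sum_add_tsum_nat_add (B + 1) hsf]
      have h1 : (∑ i ∈ range (B + 1), f i) = 0 := by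
        apply Finset.sum_eq_zero
        intro i hi
        exact hzero i (by simp only [Finset.mem_range] at hi; omega)
      rw [h1, zero_add]
      calc (∑' i : ℕ, f (i + (B + 1)))
          ≤ ∑' i : ℕ, Real.exp ((T : ℝ) - (p : ℝ)) * (Real.exp (-(p : ℝ))) ^ i :=
            Summable.tsum_le_tsum hub (hsf.comp_injective (add_left_injective (B+1))) hgsum
        _ = Real.exp ((T : ℝ) - (p : ℝ)) * (1 - Real.exp (-(p : ℝ)))⁻¹ := by
            rw [tsum_mul_left, tsum_geometric_of_lt_one hr0 hr1]
        _ ≤ 2 * Real.exp ((T : ℝ) - (p : ℝ)) := by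
            have hrhalf : Real.exp (-(p : ℝ)) ≤ 1 / 2 := by
              have h1 : Real.exp (-(p : ℝ)) ≤ Real.exp (-1) := by
                apply Real.exp_le_exp.mpr
                have : (1:ℝ) ≤ (p:ℝ) := by exact_mod_cast hp1
                linarith
              have h2 : Real.exp (-1 : ℝ) ≤ 1 / 2 := by
                rw [Real.exp_neg]
                rw [inv_le_iff_one_le_mul₀ (Real.exp_pos 1)]
                have := Real.add_one_le_exp (1:ℝ)
                linarith
              linarith
            have h3 : (1 - Real.exp (-(p : ℝ)))⁻¹ ≤ 2 := by
              rw [inv_le_iff_one_le_mul₀ (by linarith)]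
              linarith
            calc Real.exp ((T : ℝ) - (p : ℝ)) * (1 - Real.exp (-(p : ℝ)))⁻¹
                ≤ Real.exp ((T : ℝ) - (p : ℝ)) * 2 :=
                  mul_le_mul_of_nonneg_left h3 (Real.exp_pos _).le
              _ = 2 * Real.exp ((T : ℝ) - (p : ℝ)) := by ring
    refine le_trans htsum ?_
    -- final arithmetic: 2 * exp(T - p) * m^n ≤ n! * 400^n * exp(...)
    rw [le_div_iff₀ hmR]
    have hpR : (p : ℝ) = (m : ℝ) - (T : ℝ) := by
      rw [hp, Nat.cast_sub hTm.le]
    have hTp : (T : ℝ) - (p : ℝ) ≤ -((m : ℝ) / 2) := by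
      rw [hpR]
      have h4 : (4 * T : ℝ) < m := by exact_mod_cast hcase
      linarith
    have hmn : (m : ℝ) ^ n ≤ (n.factorial : ℝ) * 2 ^ n * Real.exp ((m : ℝ) / 2) := by
      have h1 : ((m : ℝ) / 2) ^ n ≤ (n.factorial : ℝ) * Real.exp ((m : ℝ) / 2) :=
        pow_le_fact_mul_exp n (by positivity)
      have h2 : (m : ℝ) ^ n = 2 ^ n * ((m : ℝ) / 2) ^ n := by
        rw [← mul_pow]; ring_nf
      rw [h2]
      calc (2:ℝ) ^ n * ((m : ℝ) / 2) ^ n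
          ≤ 2 ^ n * ((n.factorial : ℝ) * Real.exp ((m : ℝ) / 2)) :=
            mul_le_mul_of_nonneg_left h1 (by positivity)
        _ = (n.factorial : ℝ) * 2 ^ n * Real.exp ((m : ℝ) / 2) := by ring
    calc 2 * Real.exp ((T : ℝ) - (p : ℝ)) * (m : ℝ) ^ n
        ≤ 2 * Real.exp (-((m : ℝ) / 2)) * ((n.factorial : ℝ) * 2 ^ n * Real.exp ((m : ℝ) / 2)) := by
          apply mul_le_mul (by
            apply mul_le_mul_of_nonneg_left _ (by norm_num)
            exact Real.exp_le_exp.mpr hTp) hmn (by positivity) (by positivity)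
      _ = (n.factorial : ℝ) * (2 * 2 ^ n) := by
          have hE : Real.exp (-((m : ℝ) / 2)) * Real.exp ((m : ℝ) / 2) = 1 := by
            rw [← Real.exp_add]; simp
          calc 2 * Real.exp (-((m : ℝ) / 2)) * ((n.factorial : ℝ) * 2 ^ n * Real.exp ((m : ℝ) / 2))
              = (n.factorial : ℝ) * (2 * 2 ^ n) *
                (Real.exp (-((m : ℝ) / 2)) * Real.exp ((m : ℝ) / 2)) := by ring
            _ = (n.factorial : ℝ) * (2 * 2 ^ n) := by rw [hE, mul_one]
      _ ≤ (n.factorial : ℝ) * 400 ^ n := by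
          apply mul_le_mul_of_nonneg_left _ (by positivity)
          calc (2:ℝ) * 2 ^ n ≤ 2 ^ n * 2 ^ n := by
                apply mul_le_mul_of_nonneg_right _ (by positivity)
                exact le_self_pow₀ (by norm_num) (by omega)
            _ = 4 ^ n := by rw [← mul_pow]; norm_num
            _ ≤ 400 ^ n := pow_le_pow_left₀ (by norm_num) (by norm_num) n
      _ ≤ (n.factorial : ℝ) * 400 ^ n * Real.exp (0.01 * ((n : ℝ) + 1) * (T : ℝ)) := by
          nlinarith [Real.exp_pos (0.01 * ((n : ℝ) + 1) * (T : ℝ)), hexpT1,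
            (by positivity : (0:ℝ) < (n.factorial : ℝ) * 400 ^ n)]
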